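/- For the Bayesian logistic regression posterior f(β) on ℝ^p as above, lim_{‖β‖→∞} ‖∇f(β)‖² / (f(β)² ‖β‖²) = 1, and consequently lim_{‖β‖→∞} (β/‖β‖) · (∇f(β)/‖∇f(β)‖) = −1 < 0. -/

import Mathlib

open Filter
open scoped RealInnerProductSpace

private lemma scalar_upper {M b N a : ℝ} (hM0 : 0 ≤ M) (hb : M + 1 ≤ b)
    (hN2 : N ≤ b + M) (hN0 : 0 < N) (ha : a ≤ b * M) :
    (a - b ^ 2) / (b * N) ≤ (M / b - 1) / (M / b + 1) := by
  have h1 : (0:ℝ) < b := by linarith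
  have h7 : (0:ℝ) < M / b + 1 := by
    have := div_nonneg hM0 h1.le; linarith
  have h6 : (0:ℝ) < M + b := by linarith
  have hrhs : (M / b - 1) / (M / b + 1) = (M - b) / (M + b) := by
    rw [div_eq_div_iff h7.ne' h6.ne']
    field_simp
  rw [hrhs, div_le_div_iff₀ (by positivity) h6]
  have key1 : (a - b ^ 2) * (M + b) ≤ (b * M - b ^ 2) * (M + b) :=
    mul_le_mul_of_nonneg_right (by linarith) (by linarith)
  have key2 : (M - b) * (b * (b + M)) ≤ (M - b) * (b * N) :=
    mul_le_mul_of_nonpos_left (mul_le_mul_of_nonneg_left hN2 h1.le) (by linarith)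
  have mid : (b * M - b ^ 2) * (M + b) = (M - b) * (b * (b + M)) := by ring
  linarith [key1, key2, mid]

set_option maxHeartbeats 1000000 in
/-- For the Bayesian logistic regression posterior density `f β = exp (C β)` with
`C β = c - ‖β‖²/2 - ∑ᵢ (1 - yᵢ) ⟪xᵢ, β⟫ - ∑ᵢ log(1 + exp(-⟪xᵢ, β⟫))` and
`yᵢ ∈ {0, 1}`: as `‖β‖ → ∞`, `‖∇f(β)‖² / (f(β)² ‖β‖²) → 1` and consequently
`(β/‖β‖) ⬝ (∇f(β)/‖∇f(β)‖) → -1 < 0`. -/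
theorem logistic_posterior_gradient_direction_limit
    {p K : ℕ} (hp : 1 ≤ p) (hK : 1 ≤ K)
    (x : Fin K → EuclideanSpace ℝ (Fin p)) (y : Fin K → ℝ)
    (hy : ∀ i, y i = 0 ∨ y i = 1)
    (c : ℝ) (f : EuclideanSpace ℝ (Fin p) → ℝ)
    (hf : ∀ β, f β = Real.exp
      (c - ‖β‖ ^ 2 / 2 - (∑ i, (1 - y i) * ⟪x i, β⟫)
        - ∑ i, Real.log (1 + Real.exp (-⟪x i, β⟫)))) :
    Tendsto (fun β : EuclideanSpace ℝ (Fin p) =>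
        ‖gradient f β‖ ^ 2 / (f β ^ 2 * ‖β‖ ^ 2))
      (Filter.comap norm atTop) (nhds 1) ∧
    Tendsto (fun β : EuclideanSpace ℝ (Fin p) =>
        ⟪‖β‖⁻¹ • β, ‖gradient f β‖⁻¹ • gradient f β⟫)
      (Filter.comap norm atTop) (nhds (-1)) ∧
    (-1 : ℝ) < 0 := by
  have hpos : ∀ t : ℝ, (0:ℝ) < 1 + Real.exp t := fun t => by positivity
  set r : EuclideanSpace ℝ (Fin p) → EuclideanSpace ℝ (Fin p) :=
    fun β => ∑ i, (Real.exp (-⟪x i, β⟫) / (1 + Real.exp (-⟪x i, β⟫)) - (1 - y i)) • x i with hr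
  have hfpos : ∀ β, 0 < f β := fun β => by rw [hf]; exact Real.exp_pos _
  -- gradient computation
  have hgrad : ∀ β, HasGradientAt f (f β • (r β - β)) β := by
    intro β
    have hlog : ∀ t : ℝ, HasDerivAt (fun t => Real.log (1 + Real.exp (-t)))
        (Real.exp (-t) * (-1) / (1 + Real.exp (-t))) t := by
      intro t
      have h1 : HasDerivAt (fun t : ℝ => -t) (-1) t := (hasDerivAt_id t).neg
      have h2 : HasDerivAt (fun t : ℝ => Real.exp (-t)) (Real.exp (-t) * (-1)) t :=
        (Real.hasDerivAt_exp (-t)).comp t h1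
      exact (h2.const_add 1).log (ne_of_gt (hpos _))
    have hsq : HasFDerivAt (fun b : EuclideanSpace ℝ (Fin p) => ‖b‖ ^ 2 / 2)
        ((2⁻¹ : ℝ) • (2 • ((innerSL ℝ β).comp (ContinuousLinearMap.id ℝ _)))) β := by
      have h0 : HasDerivAt (fun t : ℝ => t / 2) (2⁻¹ : ℝ) (‖β‖ ^ 2) := by
        simpa using (hasDerivAt_id (‖β‖ ^ 2)).div_const 2
      exact h0.comp_hasFDerivAt β ((hasFDerivAt_id β).norm_sq)
    have hlin : HasFDerivAt (fun b : EuclideanSpace ℝ (Fin p) => ∑ i, (1 - y i) * ⟪x i, b⟫)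
        (∑ i, (1 - y i) • innerSL ℝ (x i)) β :=
      HasFDerivAt.fun_sum (fun i _ => ((innerSL ℝ (x i)).hasFDerivAt).const_mul (1 - y i))
    have hlogsum : HasFDerivAt
        (fun b : EuclideanSpace ℝ (Fin p) => ∑ i, Real.log (1 + Real.exp (-⟪x i, b⟫)))
        (∑ i, (Real.exp (-⟪x i, β⟫) * (-1) / (1 + Real.exp (-⟪x i, β⟫))) • innerSL ℝ (x i)) β :=
      HasFDerivAt.fun_sum (fun i _ => (hlog ⟪x i, β⟫).comp_hasFDerivAt β ((innerSL ℝ (x i)).hasFDerivAt))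
    have hC : HasFDerivAt (fun b : EuclideanSpace ℝ (Fin p) =>
        c - ‖b‖ ^ 2 / 2 - (∑ i, (1 - y i) * ⟪x i, b⟫) - ∑ i, Real.log (1 + Real.exp (-⟪x i, b⟫)))
        (((0 - (2⁻¹ : ℝ) • (2 • ((innerSL ℝ β).comp (ContinuousLinearMap.id ℝ _))))
          - ∑ i, (1 - y i) • innerSL ℝ (x i))
          - ∑ i, (Real.exp (-⟪x i, β⟫) * (-1) / (1 + Real.exp (-⟪x i, β⟫))) • innerSL ℝ (x i)) β :=
      (((hasFDerivAt_const c β).sub hsq).sub hlin).sub hlogsum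
    have hF : HasFDerivAt f (Real.exp (c - ‖β‖ ^ 2 / 2 - (∑ i, (1 - y i) * ⟪x i, β⟫)
          - ∑ i, Real.log (1 + Real.exp (-⟪x i, β⟫))) •
        (((0 - (2⁻¹ : ℝ) • (2 • ((innerSL ℝ β).comp (ContinuousLinearMap.id ℝ _))))
          - ∑ i, (1 - y i) • innerSL ℝ (x i))
          - ∑ i, (Real.exp (-⟪x i, β⟫) * (-1) / (1 + Real.exp (-⟪x i, β⟫))) • innerSL ℝ (x i))) β := by
      rw [show f = fun b : EuclideanSpace ℝ (Fin p) => Real.exp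
        (c - ‖b‖ ^ 2 / 2 - (∑ i, (1 - y i) * ⟪x i, b⟫)
          - ∑ i, Real.log (1 + Real.exp (-⟪x i, b⟫))) from funext hf]
      exact (Real.hasDerivAt_exp _).comp_hasFDerivAt β hC
    rw [hasGradientAt_iff_hasFDerivAt]
    refine hF.congr_fderiv (Eq.symm ?_)
    ext w
    simp only [hr, InnerProductSpace.toDual_apply_apply, ContinuousLinearMap.smul_apply,
      ContinuousLinearMap.sub_apply, ContinuousLinearMap.coe_sum', Finset.sum_apply,
      ContinuousLinearMap.coe_smul', Pi.smul_apply, innerSL_apply_apply, smul_eq_mul,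
      ContinuousLinearMap.zero_apply,
      ContinuousLinearMap.comp_apply, ContinuousLinearMap.coe_id', id_eq,
      real_inner_smul_left, inner_sub_left, sum_inner]
    have he : ∀ i : Fin K,
        (Real.exp (-⟪x i, β⟫) / (1 + Real.exp (-⟪x i, β⟫)) - (1 - y i)) * ⟪x i, w⟫
        = -((1 - y i) * ⟪x i, w⟫)
          - (Real.exp (-⟪x i, β⟫) * (-1) / (1 + Real.exp (-⟪x i, β⟫))) * ⟪x i, w⟫ := by
      intro i; ring
    rw [Finset.sum_congr rfl (fun i _ => he i), Finset.sum_sub_distrib, Finset.sum_neg_distrib]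
    rw [hf β]
    ring
  have hG : ∀ β, gradient f β = f β • (r β - β) := fun β => (hgrad β).gradient
  -- bound on r
  set M : ℝ := ∑ i, 2 * ‖x i‖ with hM
  have hM0 : 0 ≤ M := Finset.sum_nonneg (fun i _ => by positivity)
  have hrM : ∀ β, ‖r β‖ ≤ M := by
    intro β
    refine (norm_sum_le _ _).trans (Finset.sum_le_sum fun i _ => ?_)
    rw [norm_smul, Real.norm_eq_abs]
    have hq0 : (0:ℝ) ≤ Real.exp (-⟪x i, β⟫) / (1 + Real.exp (-⟪x i, β⟫)) := by positivity
    have hq1 : Real.exp (-⟪x i, β⟫) / (1 + Real.exp (-⟪x i, β⟫)) ≤ 1 := by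
      rw [div_le_one (hpos _)]; linarith
    have habs : |Real.exp (-⟪x i, β⟫) / (1 + Real.exp (-⟪x i, β⟫)) - (1 - y i)| ≤ 2 := by
      rcases hy i with h | h <;> rw [h] <;> rw [abs_le] <;> constructor <;> linarith
    exact mul_le_mul_of_nonneg_right habs (norm_nonneg _)
  -- filter facts
  set l : Filter (EuclideanSpace ℝ (Fin p)) := Filter.comap norm atTop with hl
  have hnorm : Tendsto (fun β : EuclideanSpace ℝ (Fin p) => ‖β‖) l atTop := tendsto_comap
  have hMdiv : Tendsto (fun β : EuclideanSpace ℝ (Fin p) => M / ‖β‖) l (nhds 0) :=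
    Tendsto.div_atTop tendsto_const_nhds hnorm
  have hEv : ∀ᶠ β : EuclideanSpace ℝ (Fin p) in l, M + 1 ≤ ‖β‖ := hnorm.eventually_ge_atTop (M + 1)
  -- common eventualities
  have hkey : ∀ β : EuclideanSpace ℝ (Fin p), M + 1 ≤ ‖β‖ →
      (0 < ‖β‖ ∧ ‖β‖ - M ≤ ‖r β - β‖ ∧ ‖r β - β‖ ≤ ‖β‖ + M ∧ 0 < ‖r β - β‖) := by
    intro β hb
    have h1 : 0 < ‖β‖ := by linarith
    have h2 : ‖β‖ - M ≤ ‖r β - β‖ := by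
      have := norm_sub_norm_le β (r β)
      have h3 : ‖β - r β‖ = ‖r β - β‖ := norm_sub_rev _ _
      have := hrM β
      linarith [norm_sub_norm_le β (r β), hrM β, h3]
    have h4 : ‖r β - β‖ ≤ ‖β‖ + M := by
      have := norm_sub_le (r β) β
      have := hrM β
      linarith
    exact ⟨h1, h2, by linarith, by linarith⟩
  refine ⟨?_, ?_, by norm_num⟩
  · -- first limit
    simp only [hG]
    have hlow : Tendsto (fun β : EuclideanSpace ℝ (Fin p) => (1 - M / ‖β‖) ^ 2) l (nhds 1) := by
      have := ((tendsto_const_nhds (x := (1:ℝ))).sub hMdiv).pow 2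
      norm_num at this
      exact this
    have hup : Tendsto (fun β : EuclideanSpace ℝ (Fin p) => (1 + M / ‖β‖) ^ 2) l (nhds 1) := by
      have := ((tendsto_const_nhds (x := (1:ℝ))).add hMdiv).pow 2
      norm_num at this
      exact this
    refine tendsto_of_tendsto_of_tendsto_of_le_of_le' hlow hup ?_ ?_
    · filter_upwards [hEv] with β hb
      obtain ⟨h1, h2, h4, h5⟩ := hkey β hb
      have hfb := hfpos β
      have hexpr : ‖f β • (r β - β)‖ ^ 2 / (f β ^ 2 * ‖β‖ ^ 2) = ‖r β - β‖ ^ 2 / ‖β‖ ^ 2 := by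
        rw [norm_smul, Real.norm_eq_abs, abs_of_pos hfb, mul_pow]
        exact mul_div_mul_left _ _ (by positivity)
      rw [hexpr, one_sub_div h1.ne', div_pow]
      gcongr <;> linarith
    · filter_upwards [hEv] with β hb
      obtain ⟨h1, h2, h4, h5⟩ := hkey β hb
      have hfb := hfpos β
      have hexpr : ‖f β • (r β - β)‖ ^ 2 / (f β ^ 2 * ‖β‖ ^ 2) = ‖r β - β‖ ^ 2 / ‖β‖ ^ 2 := by
        rw [norm_smul, Real.norm_eq_abs, abs_of_pos hfb, mul_pow]
        exact mul_div_mul_left _ _ (by positivity)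
      rw [hexpr, one_add_div h1.ne', div_pow]
      gcongr
  · -- second limit
    simp only [hG]
    have hU : Tendsto (fun β : EuclideanSpace ℝ (Fin p) =>
        (M / ‖β‖ - 1) / (M / ‖β‖ + 1)) l (nhds (-1)) := by
      have := (hMdiv.sub (tendsto_const_nhds (x := (1:ℝ)))).div
        (hMdiv.add (tendsto_const_nhds (x := (1:ℝ)))) (by norm_num)
      norm_num at this
      exact this
    refine tendsto_of_tendsto_of_tendsto_of_le_of_le' (tendsto_const_nhds (x := (-1:ℝ))) hU ?_ ?_
    · -- lower bound by Cauchy-Schwarz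
      filter_upwards [hEv] with β hb
      obtain ⟨h1, h2, h4, h5⟩ := hkey β hb
      have hfb := hfpos β
      have hGn : ‖f β • (r β - β)‖ = f β * ‖r β - β‖ := by
        rw [norm_smul, Real.norm_eq_abs, abs_of_pos hfb]
      have hu1 : ‖(‖β‖⁻¹ • β : EuclideanSpace ℝ (Fin p))‖ = 1 := by
        rw [norm_smul, Real.norm_eq_abs, abs_of_pos (by positivity : (0:ℝ) < ‖β‖⁻¹)]
        exact inv_mul_cancel₀ h1.ne'
      have hu2 : ‖(‖f β • (r β - β)‖⁻¹ • (f β • (r β - β)) : EuclideanSpace ℝ (Fin p))‖ = 1 := by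
        have hGp : 0 < ‖f β • (r β - β)‖ := by rw [hGn]; positivity
        rw [norm_smul, Real.norm_eq_abs, abs_of_pos (by positivity : (0:ℝ) < ‖f β • (r β - β)‖⁻¹)]
        exact inv_mul_cancel₀ hGp.ne'
      have := abs_real_inner_le_norm (‖β‖⁻¹ • β)
        (‖f β • (r β - β)‖⁻¹ • (f β • (r β - β)) : EuclideanSpace ℝ (Fin p))
      rw [hu1, hu2, mul_one] at this
      linarith [neg_abs_le (⟪‖β‖⁻¹ • β, ‖f β • (r β - β)‖⁻¹ • (f β • (r β - β))⟫ : ℝ)]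
    · -- upper bound
      filter_upwards [hEv] with β hb
      obtain ⟨h1, h2, h4, h5⟩ := hkey β hb
      have hfb := hfpos β
      set b := ‖β‖ with hbdef
      set N := ‖r β - β‖ with hNdef
      have hGn : ‖f β • (r β - β)‖ = f β * N := by
        rw [norm_smul, Real.norm_eq_abs, abs_of_pos hfb]
      have hinner : (⟪β, f β • (r β - β)⟫ : ℝ) = f β * (⟪β, r β⟫ - b ^ 2) := by
        rw [real_inner_smul_right, inner_sub_right, real_inner_self_eq_norm_sq]
      have ha : (⟪β, r β⟫ : ℝ) ≤ b * M := by
        calc (⟪β, r β⟫ : ℝ) ≤ ‖β‖ * ‖r β‖ := real_inner_le_norm _ _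
        _ ≤ b * M := by
          exact mul_le_mul_of_nonneg_left (hrM β) (norm_nonneg _)
      have hlhs : (⟪‖β‖⁻¹ • β, ‖f β • (r β - β)‖⁻¹ • (f β • (r β - β))⟫ : ℝ)
          = (⟪β, r β⟫ - b ^ 2) / (b * N) := by
        rw [real_inner_smul_left, real_inner_smul_right, hinner, hGn]
        field_simp
        rw [← hbdef]
        field_simp
      rw [hlhs]
      exact scalar_upper hM0 hb h4 h5 ha
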